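/- Let B ∈ 𝓑 and let S_{Π,l} be a wall. Then the function a ↦ {a}_B is discontinuous at some point of S_{Π,l} that lies on no other wall if and only if B splits along Π. -/

import Mathlib

open scoped BigOperators

attribute [local instance] Classical.propDecidable

noncomputable section

namespace Verlinde


variable {r : ℕ}

/-- The root `α^{ij} = e_i - e_j`, viewed as the linear functional `x_i - x_j`. -/
def stdRoot (r : ℕ) (i j : Fin r) : Fin r → ℝ :=
  fun t => (if t = i then 1 else 0) - (if t = j then 1 else 0)

/-- `B ∈ 𝓑`: an ordered tuple of roots forming a linear basis of
`V* = {a : ∑ i, a i = 0}`. -/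
def IsOB (r : ℕ) (B : Fin (r - 1) → Fin r → ℝ) : Prop :=
  (∀ m, ∃ i j, i ≠ j ∧ B m = stdRoot r i j) ∧
    LinearIndependent ℝ B ∧
    ∀ a : Fin r → ℝ, (∑ i, a i) = 0 → a ∈ Submodule.span ℝ (Set.range B)

/-- Coordinates of `a` with respect to the tuple `B` (junk unless such
coordinates exist; they are unique when `B` is linearly independent). -/
def coordsOf (B : Fin (r - 1) → Fin r → ℝ) (a : Fin r → ℝ) : Fin (r - 1) → ℝ :=
  if h : ∃ c : Fin (r - 1) → ℝ, a = ∑ j, c j • B j then h.choose else 0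

/-- The integer part `[a]_B ∈ Λ`. -/
def intPart (B : Fin (r - 1) → Fin r → ℝ) (a : Fin r → ℝ) : Fin r → ℝ :=
  ∑ j, (⌊coordsOf B a j⌋ : ℝ) • B j

/-- The fractional part `{a}_B`. -/
def fracPart (B : Fin (r - 1) → Fin r → ℝ) (a : Fin r → ℝ) : Fin r → ℝ :=
  a - intPart B a

/-- `a ∈ V*` is regular if all its `B`-coordinates are non-integral, for every `B ∈ 𝓑`,
i.e. `{a}_B ∈ ∑_j (0,1)·β^{[j]}` for every `B ∈ 𝓑`. -/
def IsRegular (r : ℕ) (a : Fin r → ℝ) : Prop :=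
  ∀ B, IsOB r B → ∀ j, Int.fract (coordsOf B a j) ≠ 0

/-- The flag `Fl(B)`: `Fl(B) j = span (β^{[j]}, …, β^{[r-1]})`. -/
def flagOf (B : Fin (r - 1) → Fin r → ℝ) : Fin (r - 1) → Submodule ℝ (Fin r → ℝ) :=
  fun j => Submodule.span ℝ {x | ∃ i, j ≤ i ∧ B i = x}

/-- `B ⊣ C`. -/
def Dashv (B C : Fin (r - 1) → Fin r → ℝ) : Prop :=
  ∀ τ : Equiv.Perm (Fin (r - 1)), flagOf (B ∘ τ) ≠ flagOf C

/-- A diagonal basis: a subset of `𝓑` of cardinality `(r-1)!` any two distinct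
members of which satisfy `B ⊣ C`. -/
def IsDiagonalBasis (r : ℕ) (D : Finset (Fin (r - 1) → Fin r → ℝ)) : Prop :=
  D.card = (r - 1).factorial ∧ (∀ B ∈ D, IsOB r B) ∧
    ∀ B ∈ D, ∀ C ∈ D, B ≠ C → Dashv B C

/-- The index of the last coordinate (`r` in `1`-indexed notation). -/
def lastI (r : ℕ) (h : 0 < r) : Fin r := ⟨r - 1, by omega⟩

/-- `ρ = ((r-1)/2, (r-3)/2, …, (1-r)/2)`. -/
def rho (r : ℕ) : Fin r → ℝ := fun i => ((r : ℝ) - 1) / 2 - (i : ℝ)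

/-- `σ · a`, where `(σ·a)_i = a_{σ⁻¹ i}`. -/
def permVec (σ : Equiv.Perm (Fin r)) (a : Fin r → ℝ) : Fin r → ℝ := fun i => a (σ⁻¹ i)

/-- A nontrivial (ordered) partition `Π = (Π′, Π″)`, encoded by `Π′ = P`:
both parts nonempty and `r ∈ Π″`. -/
def NontrivPart (r : ℕ) (h : 0 < r) (P : Finset (Fin r)) : Prop :=
  P.Nonempty ∧ lastI r h ∉ P

/-- The wall `S_{Π,l} ⊆ V*`. -/
def wallSet (r : ℕ) (P : Finset (Fin r)) (l : ℤ) : Set (Fin r → ℝ) :=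
  {c | (∑ i, c i) = 0 ∧ (∑ i ∈ P, c i) = (l : ℝ)}

/-- The simplex `Δ` of admissible parabolic weights. -/
def DeltaSet (r : ℕ) (h : 0 < r) : Set (Fin r → ℝ) :=
  {c | (∑ i, c i) = 0 ∧ (∀ i j : Fin r, i < j → c j < c i) ∧
    c ⟨0, h⟩ - c (lastI r h) < 1}

/-- The chamber of a (regular) point `c ∈ V*`. -/
def chamberOf (r : ℕ) (c : Fin r → ℝ) : Set (Fin r → ℝ) :=
  {b | (∑ i, b i) = 0 ∧ IsRegular r b ∧ ∀ B, IsOB r B → intPart B b = intPart B c}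

/-- `{i,j}` is an edge of `Tree(B)`. -/
def IsTreeEdge (B : Fin (r - 1) → Fin r → ℝ) (i j : Fin r) : Prop :=
  ∃ m, B m = stdRoot r i j ∨ B m = stdRoot r j i

/-- `B` splits along the partition `Π` (with `Π′ = P`): exactly one edge of
`Tree(B)` joins `Π′` and `Π″`. -/
def SplitsAlong (B : Fin (r - 1) → Fin r → ℝ) (P : Finset (Fin r)) : Prop :=
  ∃! pr : Fin r × Fin r, pr.1 ∈ P ∧ pr.2 ∉ P ∧ IsTreeEdge B pr.1 pr.2

/-- The linking root `β_link = α^{pq}` with `p ∈ Π′`, `q ∈ Π″`. -/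
def betaLink (B : Fin (r - 1) → Fin r → ℝ) (P : Finset (Fin r)) : Fin r → ℝ :=
  if h : ∃ pr : Fin r × Fin r, pr.1 ∈ P ∧ pr.2 ∉ P ∧ IsTreeEdge B pr.1 pr.2 then
    stdRoot r h.choose.1 h.choose.2
  else 0


lemma sum_stdRoot (i j : Fin r) : (∑ t, stdRoot r i j t) = 0 := by
  simp [stdRoot, Finset.sum_sub_distrib]

lemma sum_B_eq_zero {B : Fin (r-1) → Fin r → ℝ} (hB : IsOB r B) (m : Fin (r-1)) :
    (∑ t, B m t) = 0 := by
  obtain ⟨i, j, -, h⟩ := hB.1 m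
  rw [h]; exact sum_stdRoot i j

lemma exists_repr {B : Fin (r-1) → Fin r → ℝ} (hB : IsOB r B) {a : Fin r → ℝ}
    (ha : (∑ i, a i) = 0) : ∃ c : Fin (r-1) → ℝ, a = ∑ j, c j • B j := by
  obtain ⟨c, hc⟩ := (Submodule.mem_span_range_iff_exists_fun ℝ).1 (hB.2.2 a ha)
  exact ⟨c, hc.symm⟩

lemma coords_eq {B : Fin (r-1) → Fin r → ℝ} (hB : IsOB r B) {a : Fin r → ℝ}
    {c : Fin (r-1) → ℝ} (h : a = ∑ j, c j • B j) : coordsOf B a = c := by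
  have hex : ∃ c : Fin (r - 1) → ℝ, a = ∑ j, c j • B j := ⟨c, h⟩
  rw [coordsOf, dif_pos hex]
  have h2 := hex.choose_spec
  funext j
  have : ∑ jj, (hex.choose jj - c jj) • B jj = 0 := by
    simp [sub_smul, Finset.sum_sub_distrib, ← h2, ← h]
  have := Fintype.linearIndependent_iff.1 hB.2.1 _ this j
  linarith [this]

lemma coords_spec {B : Fin (r-1) → Fin r → ℝ} (hB : IsOB r B) {a : Fin r → ℝ}
    (ha : (∑ i, a i) = 0) : a = ∑ j, coordsOf B a j • B j := by
  obtain ⟨c, hc⟩ := exists_repr hB ha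
  rw [coords_eq hB hc]; exact hc

lemma sum_eq_zero_of_repr {B : Fin (r-1) → Fin r → ℝ} (hB : IsOB r B)
    {a : Fin r → ℝ} {c : Fin (r-1) → ℝ} (h : a = ∑ j, c j • B j) :
    (∑ i, a i) = 0 := by
  rw [h]
  simp only [Finset.sum_apply, Pi.smul_apply, smul_eq_mul]
  rw [Finset.sum_comm]
  simp [← Finset.mul_sum, sum_B_eq_zero hB]


lemma stdRoot_ne_zero {i j : Fin r} (hij : i ≠ j) : stdRoot r i j ≠ 0 := by
  intro h
  have := congrFun h i
  simp [stdRoot, hij] at this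

lemma discont_of_int_coord {B : Fin (r-1) → Fin r → ℝ} (hB : IsOB r B)
    {z : Fin r → ℝ} (hz : (∑ i, z i) = 0) {m : Fin (r-1)} {k : ℤ}
    (hk : coordsOf B z m = (k : ℝ)) :
    ¬ContinuousWithinAt (fracPart B) {c : Fin r → ℝ | (∑ i, c i) = 0} z := by
  intro hcont
  set t : ℕ → ℝ := fun n => 1 / (n + 1 : ℝ) with ht
  have htpos : ∀ n, 0 < t n := fun n => by positivity
  have htle : ∀ n, t n ≤ 1 := by
    intro n
    rw [ht]
    rw [div_le_one (by positivity)]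
    linarith [Nat.cast_nonneg (α := ℝ) n]
  set s : ℕ → Fin r → ℝ := fun n => z - t n • B m with hs
  have hsV : ∀ n, (∑ i, s n i) = 0 := by
    intro n
    simp [hs, Finset.sum_sub_distrib, hz, ← Finset.mul_sum, sum_B_eq_zero hB]
  have htlim : Filter.Tendsto t Filter.atTop (nhds 0) :=
    tendsto_one_div_add_atTop_nhds_zero_nat
  have hslim : Filter.Tendsto s Filter.atTop (nhds z) := by
    have : Filter.Tendsto (fun n => z - t n • B m) Filter.atTop (nhds (z - (0:ℝ) • B m)) :=
      Filter.Tendsto.sub tendsto_const_nhds (htlim.smul tendsto_const_nhds)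
    simpa using this
  have hcomp : Filter.Tendsto (fun n => fracPart B (s n)) Filter.atTop
      (nhds (fracPart B z)) := by
    apply (hcont.tendsto).comp
    rw [tendsto_nhdsWithin_iff]
    exact ⟨hslim, Filter.Eventually.of_forall fun n => hsV n⟩
  have hcoords : ∀ n, coordsOf B (s n) =
      fun j => coordsOf B z j - (if j = m then t n else 0) := by
    intro n
    apply coords_eq hB
    have hrepr := coords_spec hB hz
    calc s n = (∑ j, coordsOf B z j • B j) - t n • B m := by rw [hs, ← hrepr]
    _ = ∑ j, (coordsOf B z j - (if j = m then t n else 0)) • B j := by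
        simp only [sub_smul, Finset.sum_sub_distrib, ite_smul, zero_smul]
        simp
  have hint : ∀ n, intPart B (s n) = intPart B z - B m := by
    intro n
    have hsub : intPart B z - B m
        = ∑ j, ((⌊coordsOf B z j⌋ : ℝ) • B j - (if j = m then B m else 0)) := by
      rw [Finset.sum_sub_distrib]
      simp [intPart]
    rw [intPart, hcoords n, hsub]
    apply Finset.sum_congr rfl
    intro j _
    by_cases hj : j = m
    · subst hj
      have hfl : ⌊(k : ℝ) - t n⌋ = k - 1 := by
        rw [Int.floor_eq_iff]
        push_cast
        constructor <;> [linarith [htle n]; linarith [htpos n]]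
      beta_reduce
      rw [if_pos rfl, if_pos rfl, hk, hfl, Int.floor_intCast]
      push_cast
      rw [sub_smul, one_smul]
    · simp [hj]
  have hfrac : ∀ n, fracPart B (s n) = fracPart B z + (1 - t n) • B m := by
    intro n
    rw [fracPart, hint n, hs, fracPart, sub_smul, one_smul]
    module
  have hlim2 : Filter.Tendsto (fun n => fracPart B (s n)) Filter.atTop
      (nhds (fracPart B z + B m)) := by
    simp only [hfrac]
    have : Filter.Tendsto (fun n => fracPart B z + (1 - t n) • B m) Filter.atTop
        (nhds (fracPart B z + ((1:ℝ) - 0) • B m)) :=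
      Filter.Tendsto.add tendsto_const_nhds
        (((tendsto_const_nhds.sub htlim)).smul tendsto_const_nhds)
    simpa using this
  have hBm0 : B m = 0 := by
    have := tendsto_nhds_unique hcomp hlim2
    have h2 : fracPart B z + B m = fracPart B z + 0 := by rw [← this]; simp
    exact add_left_cancel h2
  obtain ⟨i, j, hij, hBm⟩ := hB.1 m
  exact stdRoot_ne_zero hij (hBm ▸ hBm0)

lemma mem_span_iff {B : Fin (r-1) → Fin r → ℝ} (hB : IsOB r B) (a : Fin r → ℝ) :
    a ∈ Submodule.span ℝ (Set.range B) ↔ (∑ i, a i) = 0 := by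
  constructor
  · intro h
    obtain ⟨c, hc⟩ := (Submodule.mem_span_range_iff_exists_fun ℝ).1 h
    exact sum_eq_zero_of_repr hB hc.symm
  · exact hB.2.2 a

/-- A linear map on all of `ℝ^r` agreeing with `coordsOf B` on `V*`. -/
lemma exists_coords_linearMap {B : Fin (r-1) → Fin r → ℝ} (hB : IsOB r B) :
    ∃ F : (Fin r → ℝ) →ₗ[ℝ] (Fin (r-1) → ℝ),
      ∀ a : Fin r → ℝ, (∑ i, a i) = 0 → F a = coordsOf B a := by
  set W := Submodule.span ℝ (Set.range B) with hW
  obtain ⟨W', hcompl⟩ := Submodule.exists_isCompl W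
  set B' : Module.Basis (Fin (r-1)) ℝ W := Module.Basis.span hB.2.1 with hB'
  set f : W →ₗ[ℝ] (Fin (r-1) → ℝ) :=
    (Finsupp.linearEquivFunOnFinite ℝ ℝ (Fin (r-1))).toLinearMap ∘ₗ B'.repr.toLinearMap
    with hf
  have fcoords : ∀ (a : Fin r → ℝ) (ha : a ∈ W), f ⟨a, ha⟩ = coordsOf B a := by
    intro a ha
    refine (coords_eq hB ?_).symm
    have := B'.sum_repr ⟨a, ha⟩
    have h2 := congrArg (Subtype.val) this
    push_cast at h2
    have h3 : ∑ j, f ⟨a, ha⟩ j • B j = ∑ x, (B'.repr ⟨a, ha⟩) x • (↑(B' x) : Fin r → ℝ) := by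
      apply Finset.sum_congr rfl
      intro j _
      congr 1
      exact (congrArg Subtype.val (Module.Basis.span_apply hB.2.1 j)).symm
    rw [h3, h2]
  refine ⟨f ∘ₗ (W.linearProjOfIsCompl W' hcompl), ?_⟩
  intro a ha
  have haW : a ∈ W := (mem_span_iff hB a).2 ha
  have : W.linearProjOfIsCompl W' hcompl a = ⟨a, haW⟩ := by
    have := Submodule.linearProjOfIsCompl_apply_left hcompl ⟨a, haW⟩
    exact this
  simp only [LinearMap.comp_apply, this]
  exact fcoords a haW

lemma cont_of_nonint_coords {B : Fin (r-1) → Fin r → ℝ} (hB : IsOB r B)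
    {z : Fin r → ℝ} (hz : (∑ i, z i) = 0)
    (h : ∀ j, Int.fract (coordsOf B z j) ≠ 0) :
    ContinuousWithinAt (fracPart B) {c : Fin r → ℝ | (∑ i, c i) = 0} z := by
  set V : Set (Fin r → ℝ) := {c | (∑ i, c i) = 0} with hV
  obtain ⟨F, hF⟩ := exists_coords_linearMap hB
  have hFc : Continuous F := F.continuous_of_finiteDimensional
  have hfloor : ∀ j, ∀ᶠ a in nhds z, ⌊F a j⌋ = ⌊coordsOf B z j⌋ := by
    intro j
    set c := coordsOf B z j with hc
    have hFz : F z j = c := by rw [hF z hz]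
    have hlt : (⌊c⌋ : ℝ) < c := by
      rcases lt_or_eq_of_le (Int.floor_le c) with h' | h'
      · exact h'
      · exact absurd (by rw [← hc, Int.fract, ← h', Int.floor_intCast]; ring) (h j)
    have hopen : IsOpen {x : Fin r → ℝ | (⌊c⌋ : ℝ) < F x j ∧ F x j < (⌊c⌋ : ℝ) + 1} := by
      have : Continuous fun x => F x j := (continuous_apply j).comp hFc
      exact IsOpen.and (isOpen_lt continuous_const this) (isOpen_lt this continuous_const)
    have hmem : z ∈ {x : Fin r → ℝ | (⌊c⌋ : ℝ) < F x j ∧ F x j < (⌊c⌋ : ℝ) + 1} := by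
      rw [Set.mem_setOf_eq, hFz]
      exact ⟨hlt, Int.lt_floor_add_one c⟩
    filter_upwards [hopen.mem_nhds hmem] with a ha
    rw [Int.floor_eq_iff]
    exact ⟨le_of_lt ha.1, ha.2⟩
  have hev : ∀ᶠ a in nhdsWithin z V, fracPart B a = a - intPart B z := by
    have hall : ∀ᶠ a in nhds z, ∀ j, ⌊F a j⌋ = ⌊coordsOf B z j⌋ :=
      Filter.eventually_all.2 hfloor
    filter_upwards [nhdsWithin_le_nhds hall, self_mem_nhdsWithin] with a ha haV
    have : intPart B a = intPart B z := by
      unfold intPart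
      apply Finset.sum_congr rfl
      intro j _
      rw [← hF a haV, ha j]
    rw [fracPart, this]
  have hbase : ContinuousWithinAt (fun a : Fin r → ℝ => a - intPart B z) V z :=
    (continuous_id.sub continuous_const).continuousWithinAt
  apply hbase.congr_of_eventuallyEq hev
  rfl

lemma sumP_coords {B : Fin (r-1) → Fin r → ℝ} (hB : IsOB r B) {a : Fin r → ℝ}
    (ha : (∑ i, a i) = 0) (P : Finset (Fin r)) :
    (∑ i ∈ P, a i) = ∑ j, coordsOf B a j * (∑ i ∈ P, B j i) := by
  conv_lhs => rw [coords_spec hB ha]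
  simp only [Finset.sum_apply, Pi.smul_apply, smul_eq_mul]
  rw [Finset.sum_comm]
  simp [Finset.mul_sum]

lemma sumP_stdRoot (P : Finset (Fin r)) (i j : Fin r) :
    (∑ t ∈ P, stdRoot r i j t) =
      (if i ∈ P then (1:ℝ) else 0) - (if j ∈ P then 1 else 0) := by
  simp [stdRoot, Finset.sum_sub_distrib, Finset.sum_ite_eq']

lemma stdRoot_swap (i j : Fin r) : stdRoot r j i = -stdRoot r i j := by
  funext t
  show _ - _ = -((_ : ℝ) - _)
  ring

lemma stdRoot_eq_one_iff {i j t : Fin r} (hij : i ≠ j) :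
    stdRoot r i j t = 1 ↔ t = i := by
  by_cases h1 : t = i <;> by_cases h2 : t = j
  · exact absurd (h1.symm.trans h2) hij
  · norm_num [stdRoot, h1, h2, hij, Ne.symm hij]
  · norm_num [stdRoot, h1, h2, hij, Ne.symm hij]
  · norm_num [stdRoot, h1, h2, hij, Ne.symm hij]

lemma stdRoot_eq_neg_one_iff {i j t : Fin r} (hij : i ≠ j) :
    stdRoot r i j t = -1 ↔ t = j := by
  by_cases h1 : t = i <;> by_cases h2 : t = j
  · exact absurd (h1.symm.trans h2) hij
  · norm_num [stdRoot, h1, h2, hij, Ne.symm hij]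
  · norm_num [stdRoot, h1, h2, hij, Ne.symm hij]
  · norm_num [stdRoot, h1, h2, hij, Ne.symm hij]

lemma stdRoot_inj {i j i' j' : Fin r} (hij : i ≠ j) (hij' : i' ≠ j')
    (h : stdRoot r i j = stdRoot r i' j') : i = i' ∧ j = j' := by
  constructor
  · have hi := congrFun h i
    rw [(stdRoot_eq_one_iff hij).2 rfl] at hi
    exact (stdRoot_eq_one_iff hij').1 hi.symm
  · have hj := congrFun h j
    rw [(stdRoot_eq_neg_one_iff hij).2 rfl] at hj
    exact (stdRoot_eq_neg_one_iff hij').1 hj.symm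

lemma index_unique {B : Fin (r-1) → Fin r → ℝ} (hB : IsOB r B) {m m' : Fin (r-1)}
    {p q : Fin r}
    (h1 : B m = stdRoot r p q ∨ B m = stdRoot r q p)
    (h2 : B m' = stdRoot r p q ∨ B m' = stdRoot r q p)
    (hpq : p ≠ q) : m = m' := by
  by_contra hne
  have key : B m = B m' ∨ B m = -B m' := by
    rcases h1 with h1 | h1 <;> rcases h2 with h2 | h2
    · exact Or.inl (h1.trans h2.symm)
    · right; rw [h1, h2, stdRoot_swap]
    · right; rw [h1, h2, stdRoot_swap]
    · exact Or.inl (h1.trans h2.symm)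
  rcases key with key | key
  · have := Fintype.linearIndependent_iff.1 hB.2.1
      (fun j => (if j = m then (1:ℝ) else 0) - (if j = m' then 1 else 0)) ?_ m
    · rw [if_pos (rfl : m = m), if_neg hne] at this; norm_num at this
    · simp only [sub_smul, ite_smul, one_smul, zero_smul, Finset.sum_sub_distrib]
      simp [Finset.sum_ite_eq', key]
  · have := Fintype.linearIndependent_iff.1 hB.2.1
      (fun j => (if j = m then (1:ℝ) else 0) + (if j = m' then 1 else 0)) ?_ m
    · rw [if_pos (rfl : m = m), if_neg hne] at this; norm_num at this
    · simp only [add_smul, ite_smul, one_smul, zero_smul, Finset.sum_add_distrib]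
      simp [Finset.sum_ite_eq', key]

lemma splits_iff_unique_cross {B : Fin (r-1) → Fin r → ℝ} (hB : IsOB r B)
    (P : Finset (Fin r)) :
    SplitsAlong B P ↔ ∃! m : Fin (r-1), (∑ i ∈ P, B m i) ≠ 0 := by
  constructor
  · rintro ⟨⟨p, q⟩, ⟨hp, hq, m, hm⟩, huniq⟩
    simp only at hp hq hm
    have hpq : p ≠ q := fun h => hq (h ▸ hp)
    refine ⟨m, ?_, ?_⟩
    · rcases hm with hm | hm <;> rw [hm, sumP_stdRoot]
      · rw [if_pos hp, if_neg hq]; norm_num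
      · rw [if_neg hq, if_pos hp]; norm_num
    · intro m' hm'
      obtain ⟨i, j, hij, hBm'⟩ := hB.1 m'
      rw [hBm', sumP_stdRoot] at hm'
      by_cases h1 : i ∈ P
      · have h2 : j ∉ P := by
          intro h2
          rw [if_pos h1, if_pos h2] at hm'; exact hm' (by ring)
        have hpr := huniq (i, j) ⟨h1, h2, m', Or.inl hBm'⟩
        have hi : i = p := congrArg Prod.fst hpr
        have hj : j = q := congrArg Prod.snd hpr
        exact index_unique hB (Or.inl (by rw [hBm', hi, hj])) hm hpq
      · have h2 : j ∈ P := by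
          by_contra h2
          rw [if_neg h1, if_neg h2] at hm'; exact hm' (by ring)
        have hpr := huniq (j, i) ⟨h2, h1, m', Or.inr hBm'⟩
        have hj : j = p := congrArg Prod.fst hpr
        have hi : i = q := congrArg Prod.snd hpr
        exact index_unique hB (Or.inr (by rw [hBm', hi, hj])) hm hpq
  · rintro ⟨m, hm, huniq⟩
    obtain ⟨i, j, hij, hBm⟩ := hB.1 m
    rw [hBm, sumP_stdRoot] at hm
    have hcross : (i ∈ P ∧ j ∉ P) ∨ (j ∈ P ∧ i ∉ P) := by
      by_cases h1 : i ∈ P <;> by_cases h2 : j ∈ P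
      · exfalso; rw [if_pos h1, if_pos h2] at hm; exact hm (by ring)
      · exact Or.inl ⟨h1, h2⟩
      · exact Or.inr ⟨h2, h1⟩
      · exfalso; rw [if_neg h1, if_neg h2] at hm; exact hm (by ring)
    rcases hcross with ⟨h1, h2⟩ | ⟨h1, h2⟩
    · refine ⟨(i, j), ⟨h1, h2, m, Or.inl hBm⟩, ?_⟩
      rintro ⟨p, q⟩ ⟨hp, hq, m', hm'⟩
      simp only at hp hq hm'
      have hpq : p ≠ q := fun h => hq (h ▸ hp)
      have hmm' : m' = m := by
        apply huniq
        rcases hm' with h | h <;> rw [h, sumP_stdRoot]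
        · rw [if_pos hp, if_neg hq]; norm_num
        · rw [if_neg hq, if_pos hp]; norm_num
      rw [hmm'] at hm'
      rcases hm' with h | h
      · have h' := hBm.symm.trans h
        obtain ⟨hip, hjq⟩ := stdRoot_inj hij hpq h'
        exact Prod.ext hip.symm hjq.symm
      · have h' := hBm.symm.trans h
        obtain ⟨hiq, hjp⟩ := stdRoot_inj hij (Ne.symm hpq) h'
        exact absurd (hiq ▸ h1) hq
    · refine ⟨(j, i), ⟨h1, h2, m, Or.inr (by rw [hBm])⟩, ?_⟩
      rintro ⟨p, q⟩ ⟨hp, hq, m', hm'⟩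
      simp only at hp hq hm'
      have hpq : p ≠ q := fun h => hq (h ▸ hp)
      have hmm' : m' = m := by
        apply huniq
        rcases hm' with h | h <;> rw [h, sumP_stdRoot]
        · rw [if_pos hp, if_neg hq]; norm_num
        · rw [if_neg hq, if_pos hp]; norm_num
      rw [hmm'] at hm'
      rcases hm' with h | h
      · have h' := hBm.symm.trans h
        obtain ⟨hip, hjq⟩ := stdRoot_inj hij hpq h'
        exact absurd hp (hip ▸ h2)
      · have h' := hBm.symm.trans h
        obtain ⟨hiq, hjp⟩ := stdRoot_inj hij (Ne.symm hpq) h'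
        exact Prod.ext hjp.symm hiq.symm
lemma pow_sum_inj {A C : Finset (Fin r)}
    (h : (∑ t ∈ A, (2:ℚ)^(t:ℕ)) = ∑ t ∈ C, (2:ℚ)^(t:ℕ)) : A = C := by
  have h' : ((∑ t ∈ A, 2^(t:ℕ) : ℕ) : ℚ) = ((∑ t ∈ C, 2^(t:ℕ) : ℕ) : ℚ) := by
    push_cast
    exact h
  have h'' : (∑ t ∈ A, 2^(t:ℕ) : ℕ) = (∑ t ∈ C, 2^(t:ℕ) : ℕ) := Nat.cast_injective h'
  have h2 : (∑ t ∈ A.image Fin.val, 2^t) = ∑ t ∈ C.image Fin.val, 2^t := by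
    rw [Finset.sum_image (fun x _ y _ h => Fin.val_injective h),
      Finset.sum_image (fun x _ y _ h => Fin.val_injective h)]
    exact h''
  have h3 := Finset.geomSum_injective (le_refl 2) h2
  exact Finset.image_injective Fin.val_injective h3

lemma exists_generic (hr : 2 ≤ r) (P : Finset (Fin r)) (hPne : P.Nonempty)
    (hPl : lastI r (Nat.lt_of_lt_of_le Nat.zero_lt_two hr) ∉ P) (l : ℤ) :
    ∃ z : Fin r → ℝ, (∑ i, z i) = 0 ∧ (∑ i ∈ P, z i) = (l:ℝ) ∧
      ∀ Q : Finset (Fin r), Q.Nonempty → lastI r (Nat.lt_of_lt_of_le Nat.zero_lt_two hr) ∉ Q → Q ≠ P →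
        ∀ l' : ℤ, (∑ i ∈ Q, z i) ≠ (l':ℝ) := by
  obtain ⟨p0, hp0⟩ := hPne
  set ℓ : Fin r := lastI r (by omega) with hℓ
  have hp0l : p0 ≠ ℓ := fun h => hPl (h ▸ hp0)
  set N : Fin r → ℚ := fun i => (2:ℚ)^((i:ℕ)) with hN
  have hNpos : ∀ i, 0 < N i := fun i => by positivity
  set y : Fin r → ℚ := fun i =>
    if i = p0 then -(∑ t ∈ P.erase p0, N t)
    else if i = ℓ then -(∑ t ∈ (Finset.univ \ P).erase ℓ, N t) else N i with hy
  set v : Fin r → ℚ := fun i =>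
    if i ∈ P then 1/(P.card:ℚ) else -(1/(((Finset.univ : Finset (Fin r)) \ P).card : ℚ))
    with hv
  have hcardP : 0 < P.card := Finset.card_pos.2 ⟨p0, hp0⟩
  have hlC : ℓ ∈ Finset.univ \ P := Finset.mem_sdiff.2 ⟨Finset.mem_univ _, hPl⟩
  have hcardC : 0 < ((Finset.univ : Finset (Fin r)) \ P).card := Finset.card_pos.2 ⟨ℓ, hlC⟩
  -- sums of v
  have hyp0 : y p0 = -(∑ t ∈ P.erase p0, N t) := by
    rw [hy]
    beta_reduce
    rw [if_pos rfl]
  have hyℓ : y ℓ = -(∑ t ∈ (Finset.univ \ P).erase ℓ, N t) := by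
    rw [hy]
    beta_reduce
    rw [if_neg (Ne.symm hp0l), if_pos rfl]
  have hvP : (∑ i ∈ P, v i) = 1 := by
    have h1 : ∀ i ∈ P, v i = 1/(P.card:ℚ) := fun i hi => by simp only [hv, if_pos hi]
    rw [Finset.sum_congr rfl h1, Finset.sum_const, nsmul_eq_mul, mul_one_div,
      div_self (by exact_mod_cast hcardP.ne' : (P.card:ℚ) ≠ 0)]
  have hvC : (∑ i ∈ Finset.univ \ P, v i) = -1 := by
    have h1 : ∀ i ∈ Finset.univ \ P, v i = -(1/(((Finset.univ : Finset (Fin r)) \ P).card:ℚ)) :=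
      fun i hi => by simp only [hv, if_neg (Finset.mem_sdiff.1 hi).2]
    rw [Finset.sum_congr rfl h1, Finset.sum_const, nsmul_eq_mul, mul_neg, mul_one_div,
      div_self (by exact_mod_cast hcardC.ne' : ((((Finset.univ : Finset (Fin r)) \ P).card):ℚ) ≠ 0)]
  have hvU : (∑ i, v i) = 0 := by
    rw [← Finset.sum_sdiff (Finset.subset_univ P), hvP, hvC]
    ring
  -- sums of y
  have hyval : ∀ i, i ≠ p0 → i ≠ ℓ → y i = N i := by
    intro i h1 h2
    rw [hy]; simp only [if_neg h1, if_neg h2]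
  have hyP : (∑ i ∈ P, y i) = 0 := by
    rw [← Finset.add_sum_erase P y hp0]
    have : ∀ i ∈ P.erase p0, y i = N i := by
      intro i hi
      exact hyval i (Finset.ne_of_mem_erase hi)
        (fun h => hPl (h ▸ (Finset.mem_of_mem_erase hi)))
    rw [Finset.sum_congr rfl this, hyp0]
    ring
  have hyC : (∑ i ∈ Finset.univ \ P, y i) = 0 := by
    rw [← Finset.add_sum_erase _ y hlC]
    have : ∀ i ∈ (Finset.univ \ P).erase ℓ, y i = N i := by
      intro i hi
      refine hyval i ?_ (Finset.ne_of_mem_erase hi)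
      intro h
      exact (Finset.mem_sdiff.1 (Finset.mem_of_mem_erase hi)).2 (h ▸ hp0)
    rw [Finset.sum_congr rfl this, hyℓ]
    ring
  have hyU : (∑ i, y i) = 0 := by
    rw [← Finset.sum_sdiff (Finset.subset_univ P), hyP, hyC]
    ring
  -- nonvanishing on other Q
  have hyQ : ∀ Q : Finset (Fin r), Q.Nonempty → ℓ ∉ Q → Q ≠ P → (∑ i ∈ Q, y i) ≠ 0 := by
    intro Q hQne hQl hQP
    by_cases hp0Q : p0 ∈ Q
    · rw [← Finset.add_sum_erase Q y hp0Q]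
      have : ∀ i ∈ Q.erase p0, y i = N i := by
        intro i hi
        exact hyval i (Finset.ne_of_mem_erase hi)
          (fun h => hQl (h ▸ (Finset.mem_of_mem_erase hi)))
      rw [Finset.sum_congr rfl this, hyp0]
      intro hcontra
      have hsums : (∑ t ∈ Q.erase p0, N t) = ∑ t ∈ P.erase p0, N t := by linarith
      have := pow_sum_inj hsums
      apply hQP
      rw [← Finset.insert_erase hp0Q, ← Finset.insert_erase hp0, this]
    · have : ∀ i ∈ Q, y i = N i := by
        intro i hi
        exact hyval i (fun h => hp0Q (h ▸ hi)) (fun h => hQl (h ▸ hi))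
      rw [Finset.sum_congr rfl this]
      have : 0 < ∑ i ∈ Q, N i := Finset.sum_pos (fun i _ => hNpos i) hQne
      linarith
  -- the point z
  refine ⟨fun i => (l:ℝ) * (v i:ℝ) + Real.sqrt 2 * (y i:ℝ), ?_, ?_, ?_⟩
  · rw [Finset.sum_add_distrib, ← Finset.mul_sum, ← Finset.mul_sum]
    rw [show (∑ i, ((v i : ℝ))) = ((∑ i, v i : ℚ) : ℝ) by push_cast; rfl]
    rw [show (∑ i, ((y i : ℝ))) = ((∑ i, y i : ℚ) : ℝ) by push_cast; rfl]
    rw [hvU, hyU]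
    simp
  · rw [Finset.sum_add_distrib, ← Finset.mul_sum, ← Finset.mul_sum]
    rw [show (∑ i ∈ P, ((v i : ℝ))) = ((∑ i ∈ P, v i : ℚ) : ℝ) by push_cast; rfl]
    rw [show (∑ i ∈ P, ((y i : ℝ))) = ((∑ i ∈ P, y i : ℚ) : ℝ) by push_cast; rfl]
    rw [hvP, hyP]
    simp
  · intro Q hQne hQl hQP l' hcontra
    rw [Finset.sum_add_distrib, ← Finset.mul_sum, ← Finset.mul_sum] at hcontra
    rw [show (∑ i ∈ Q, ((v i : ℝ))) = ((∑ i ∈ Q, v i : ℚ) : ℝ) by push_cast; rfl] at hcontra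
    rw [show (∑ i ∈ Q, ((y i : ℝ))) = ((∑ i ∈ Q, y i : ℚ) : ℝ) by push_cast; rfl] at hcontra
    set vQ : ℚ := ∑ i ∈ Q, v i
    set yQ : ℚ := ∑ i ∈ Q, y i
    have hyQ0 : yQ ≠ 0 := hyQ Q hQne hQl hQP
    have hyQR : (yQ : ℝ) ≠ 0 := by exact_mod_cast hyQ0
    apply irrational_sqrt_two
    refine ⟨((l':ℚ) - (l:ℚ) * vQ)/yQ, ?_⟩
    rw [Rat.cast_div]
    rw [div_eq_iff hyQR]
    push_cast
    linarith
lemma repr_as_sum {a : Fin r → ℝ} (ha : (∑ i, a i) = 0) (ℓ : Fin r) :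
    a = ∑ i, a i • stdRoot r i ℓ := by
  funext t
  simp only [Finset.sum_apply, Pi.smul_apply, smul_eq_mul, stdRoot, mul_sub,
    Finset.sum_sub_distrib, mul_ite, mul_one, mul_zero]
  have h1 : (∑ i, if t = i then a i else 0) = a t := by
    simp [Finset.sum_ite_eq]
  have h2 : (∑ i : Fin r, if t = ℓ then a i else 0) = 0 := by
    by_cases h : t = ℓ
    · simp only [if_pos h]
      exact ha
    · simp only [if_neg h, Finset.sum_const_zero]
  rw [h1, h2, sub_zero]

lemma coords_eq_weight {B : Fin (r-1) → Fin r → ℝ} (hB : IsOB r B) (ℓ : Fin r)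
    {a : Fin r → ℝ} (ha : (∑ i, a i) = 0) :
    coordsOf B a = fun j => ∑ i, a i * coordsOf B (stdRoot r i ℓ) j := by
  apply coords_eq hB
  calc a = ∑ i, a i • stdRoot r i ℓ := repr_as_sum ha ℓ
    _ = ∑ i, a i • ∑ j, coordsOf B (stdRoot r i ℓ) j • B j := by
        refine Finset.sum_congr rfl fun i _ => ?_
        rw [← coords_spec hB (sum_stdRoot i ℓ)]
    _ = ∑ j, (∑ i, a i * coordsOf B (stdRoot r i ℓ) j) • B j := by
        simp only [Finset.smul_sum, smul_smul, Finset.sum_smul]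
        exact Finset.sum_comm

lemma coords_single {B : Fin (r-1) → Fin r → ℝ} (hB : IsOB r B) (j : Fin (r-1)) :
    coordsOf B (B j) = fun j' => if j' = j then (1:ℝ) else 0 := by
  apply coords_eq hB
  simp [ite_smul, Finset.sum_ite_eq']

lemma dot_stdRoot (w : Fin r → ℝ) (i0 j0 : Fin r) :
    (∑ i, w i * stdRoot r i0 j0 i) = w i0 - w j0 := by
  simp only [stdRoot, mul_sub, Finset.sum_sub_distrib, mul_ite, mul_one, mul_zero]
  congr 1 <;> simp [Finset.sum_ite_eq']

lemma weight_dot {B : Fin (r-1) → Fin r → ℝ} (hB : IsOB r B) (ℓ : Fin r)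
    (m j : Fin (r-1)) :
    (∑ i, coordsOf B (stdRoot r i ℓ) m * B j i) = if j = m then 1 else 0 := by
  have h1 := congrFun (coords_eq_weight hB ℓ (sum_B_eq_zero hB j)) m
  rw [coords_single hB j] at h1
  beta_reduce at h1
  rw [show ((if m = j then (1:ℝ) else 0) = if j = m then 1 else 0) by
    by_cases h : j = m
    · rw [if_pos h, if_pos h.symm]
    · rw [if_neg h, if_neg (Ne.symm h)]] at h1
  rw [h1]
  exact Finset.sum_congr rfl fun i _ => mul_comm _ _

lemma weight_two_values (hr : 2 ≤ r) {B : Fin (r-1) → Fin r → ℝ} (hB : IsOB r B)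
    (m : Fin (r-1)) (ℓ : Fin r) :
    ∃ p q : Fin r, B m = stdRoot r p q ∧ p ≠ q ∧
      coordsOf B (stdRoot r p ℓ) m = coordsOf B (stdRoot r q ℓ) m + 1 ∧
      ∀ i, coordsOf B (stdRoot r i ℓ) m = coordsOf B (stdRoot r p ℓ) m ∨
        coordsOf B (stdRoot r i ℓ) m = coordsOf B (stdRoot r q ℓ) m := by
  set w : Fin r → ℝ := fun i => coordsOf B (stdRoot r i ℓ) m with hw
  have hdot : ∀ j, (∑ i, w i * B j i) = if j = m then 1 else 0 :=
    fun j => weight_dot hB ℓ m j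
  obtain ⟨p, q, hpq, hBm⟩ := hB.1 m
  have hpq1 : w p = w q + 1 := by
    have h0 := hdot m
    rw [if_pos rfl, hBm, dot_stdRoot] at h0
    linarith
  refine ⟨p, q, hBm, hpq, hpq1, ?_⟩
  set S : Finset ℝ := Finset.image w Finset.univ with hS
  set cl : ℝ → Finset (Fin r) := fun t => Finset.univ.filter (fun i => w i = t) with hcl
  have hwS : ∀ i, w i ∈ S := fun i => Finset.mem_image_of_mem w (Finset.mem_univ i)
  set Φ : (Fin r → ℝ) →ₗ[ℝ] ({x // x ∈ S} → ℝ) :=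
    { toFun := fun v t => ∑ i ∈ cl t.1, v i
      map_add' := by intro u v; funext t; exact Finset.sum_add_distrib
      map_smul' := by intro c v; funext t; simp [Finset.mul_sum] } with hΦ
  have hclpos : ∀ t : ℝ, t ∈ S → 0 < (cl t).card := by
    intro t ht
    obtain ⟨i, -, hi⟩ := Finset.mem_image.1 ht
    exact Finset.card_pos.2 ⟨i, Finset.mem_filter.2 ⟨Finset.mem_univ i, hi⟩⟩
  have hsurj : Function.Surjective Φ := by
    intro g
    refine ⟨fun i => g ⟨w i, hwS i⟩ / ((cl (w i)).card : ℝ), ?_⟩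
    funext t
    obtain ⟨t, ht⟩ := t
    show (∑ i ∈ cl t, g ⟨w i, hwS i⟩ / ((cl (w i)).card : ℝ)) = g ⟨t, ht⟩
    have hcongr : ∀ i ∈ cl t, g ⟨w i, hwS i⟩ / ((cl (w i)).card : ℝ)
        = g ⟨t, ht⟩ / ((cl t).card : ℝ) := by
      intro i hi
      have hwi : w i = t := (Finset.mem_filter.1 hi).2
      have h1 : (⟨w i, hwS i⟩ : {x // x ∈ S}) = ⟨t, ht⟩ := Subtype.ext hwi
      rw [h1, hwi]
    rw [Finset.sum_congr rfl hcongr, Finset.sum_const, nsmul_eq_mul, mul_comm,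
      div_mul_cancel₀]
    exact_mod_cast (hclpos t ht).ne'
  have hrank := LinearMap.finrank_range_add_finrank_ker Φ
  rw [LinearMap.range_eq_top.2 hsurj] at hrank
  rw [finrank_top, Module.finrank_fintype_fun_eq_card, Module.finrank_fintype_fun_eq_card,
    Fintype.card_coe, Fintype.card_fin] at hrank
  have hspan : Submodule.span ℝ (Set.range B) ≤
      LinearMap.ker Φ ⊔ Submodule.span ℝ {B m} := by
    rw [Submodule.span_le]
    rintro x ⟨j, rfl⟩
    by_cases hj : j = m
    · subst hj
      exact Submodule.mem_sup_right (Submodule.subset_span (Set.mem_singleton _))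
    · apply Submodule.mem_sup_left
      rw [LinearMap.mem_ker]
      obtain ⟨i0, j0, hij0, hBj⟩ := hB.1 j
      have hww : w i0 = w j0 := by
        have h0 := hdot j
        rw [if_neg hj, hBj, dot_stdRoot] at h0
        linarith
      funext t
      show (∑ i ∈ cl t.1, B j i) = 0
      rw [hBj, sumP_stdRoot]
      have hiff : i0 ∈ cl t.1 ↔ j0 ∈ cl t.1 := by
        simp only [hcl, Finset.mem_filter, Finset.mem_univ, true_and, hww]
      by_cases h1 : i0 ∈ cl t.1
      · rw [if_pos h1, if_pos (hiff.1 h1)]; ring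
      · rw [if_neg h1, if_neg (fun h => h1 (hiff.2 h))]; ring
  have hr1 : Module.finrank ℝ (Submodule.span ℝ (Set.range B)) = r - 1 := by
    rw [finrank_span_eq_card hB.2.1, Fintype.card_fin]
  have hsing : Module.finrank ℝ (Submodule.span ℝ ({B m} : Set (Fin r → ℝ))) = 1 := by
    apply finrank_span_singleton
    rw [hBm]
    exact stdRoot_ne_zero hpq
  have hmono : Module.finrank ℝ (Submodule.span ℝ (Set.range B)) ≤
      Module.finrank ℝ ↥(LinearMap.ker Φ ⊔ Submodule.span ℝ {B m}) :=
    Submodule.finrank_mono hspan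
  have hsup : Module.finrank ℝ ↥(LinearMap.ker Φ ⊔ Submodule.span ℝ {B m}) ≤
      Module.finrank ℝ (LinearMap.ker Φ) + 1 := by
    have := Submodule.finrank_sup_add_finrank_inf_eq (LinearMap.ker Φ)
      (Submodule.span ℝ ({B m} : Set (Fin r → ℝ)))
    omega
  have hcard2 : S.card ≤ 2 := by
    rw [hr1] at hmono
    omega
  -- now conclude
  have hwpq : w p ≠ w q := by intro h; rw [h] at hpq1; linarith
  have hsub : ({w p, w q} : Finset ℝ) ⊆ S := by
    intro x hx
    rcases Finset.mem_insert.1 hx with h | h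
    · exact h ▸ hwS p
    · exact (Finset.mem_singleton.1 h) ▸ hwS q
  have hcard : ({w p, w q} : Finset ℝ).card = 2 := by
    rw [Finset.card_insert_of_notMem (fun h => hwpq (Finset.mem_singleton.1 h)),
      Finset.card_singleton]
  have hSeq : S = {w p, w q} :=
    (Finset.eq_of_subset_of_card_le hsub (hcard ▸ hcard2)).symm ▸ rfl
  intro i
  have := hwS i
  rw [hSeq] at this
  rcases Finset.mem_insert.1 this with h | h
  · exact Or.inl h
  · exact Or.inr (Finset.mem_singleton.1 h)
lemma stdRoot_self (i : Fin r) : stdRoot r i i = 0 := funext fun t => sub_self _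

lemma coords_zero {B : Fin (r-1) → Fin r → ℝ} (hB : IsOB r B) :
    coordsOf B (0 : Fin r → ℝ) = 0 := coords_eq hB (by simp)

/-- (Lemma `lemmaBBwall`.)  The fractional part `a ↦ {a}_B`
(as a function on `V*`) is discontinuous at some point of the wall `S_{Π,l}`
lying on no other wall if and only if `Tree(B)` splits along `Π`. -/
theorem fracPart_discontinuous_on_wall_iff_splits
    (r : ℕ) (hr : 2 ≤ r)
    (B : Fin (r - 1) → Fin r → ℝ) (hB : IsOB r B)
    (P : Finset (Fin r)) (hP : NontrivPart r (by omega) P) (l : ℤ) :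
    (∃ z, z ∈ wallSet r P l ∧
      (∀ (Q : Finset (Fin r)) (l' : ℤ), NontrivPart r (by omega) Q →
        ¬(Q = P ∧ l' = l) → z ∉ wallSet r Q l') ∧
      ¬ContinuousWithinAt (fracPart B) {c : Fin r → ℝ | (∑ i, c i) = 0} z) ↔
    SplitsAlong B P := by
  constructor
  · rintro ⟨z, hzw, hother, hdisc⟩
    obtain ⟨hzsum, hzP⟩ := hzw
    have hex : ∃ m, Int.fract (coordsOf B z m) = 0 := by
      by_contra hcon
      push_neg at hcon
      exact hdisc (cont_of_nonint_coords hB hzsum hcon)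
    obtain ⟨m, hm⟩ := hex
    have hkz : coordsOf B z m = (⌊coordsOf B z m⌋ : ℝ) := by
      have hfr : Int.fract (coordsOf B z m) = coordsOf B z m - ⌊coordsOf B z m⌋ := rfl
      rw [hfr] at hm
      linarith
    set ℓ : Fin r := lastI r (by omega) with hℓ
    obtain ⟨p, q, hBm, hpq, hpq1, htwo⟩ := weight_two_values hr hB m ℓ
    have hwl : coordsOf B (stdRoot r ℓ ℓ) m = 0 := by
      rw [stdRoot_self, coords_zero hB]
      rfl
    have hcase : (coordsOf B (stdRoot r p ℓ) m = 1 ∧ coordsOf B (stdRoot r q ℓ) m = 0)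
        ∨ (coordsOf B (stdRoot r p ℓ) m = 0 ∧ coordsOf B (stdRoot r q ℓ) m = -1) := by
      rcases htwo ℓ with h | h
      · right; rw [hwl] at h; constructor <;> linarith
      · left; rw [hwl] at h; constructor <;> linarith
    obtain ⟨Q, ε, hε, hQne, hQl, hQ1⟩ : ∃ (Q : Finset (Fin r)) (ε : ℤ),
        (ε = 1 ∨ ε = -1) ∧ Q.Nonempty ∧ ℓ ∉ Q ∧
        ∀ v : Fin r → ℝ, (∑ i ∈ Q, v i)
          = (ε:ℝ) * ∑ i, coordsOf B (stdRoot r i ℓ) m * v i := by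
      rcases hcase with ⟨hp1, hq0⟩ | ⟨hp0, hq1⟩
      · refine ⟨Finset.univ.filter (fun i => coordsOf B (stdRoot r i ℓ) m = 1), 1,
          Or.inl rfl, ⟨p, Finset.mem_filter.2 ⟨Finset.mem_univ _, hp1⟩⟩, ?_, ?_⟩
        · intro hmem
          have hthis := (Finset.mem_filter.1 hmem).2
          beta_reduce at hthis
          rw [hwl] at hthis
          norm_num at hthis
        · intro v
          rw [Finset.sum_filter]
          push_cast
          rw [one_mul]
          refine Finset.sum_congr rfl fun i _ => ?_
          rcases htwo i with h | h
          · rw [if_pos (by rw [h, hp1]), h, hp1, one_mul]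
          · rw [if_neg (by rw [h, hq0]; norm_num), h, hq0, zero_mul]
      · refine ⟨Finset.univ.filter (fun i => coordsOf B (stdRoot r i ℓ) m = -1), -1,
          Or.inr rfl, ⟨q, Finset.mem_filter.2 ⟨Finset.mem_univ _, hq1⟩⟩, ?_, ?_⟩
        · intro hmem
          have hthis := (Finset.mem_filter.1 hmem).2
          beta_reduce at hthis
          rw [hwl] at hthis
          norm_num at hthis
        · intro v
          rw [Finset.sum_filter]
          push_cast
          rw [neg_one_mul, ← Finset.sum_neg_distrib]
          refine Finset.sum_congr rfl fun i _ => ?_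
          rcases htwo i with h | h
          · rw [if_neg (by rw [h, hp0]; norm_num), h, hp0]; ring
          · rw [if_pos (by rw [h, hq1]), h, hq1]; ring
    have hdotz : coordsOf B z m = ∑ i, coordsOf B (stdRoot r i ℓ) m * z i := by
      have h1 := congrFun (coords_eq_weight hB ℓ hzsum) m
      rw [h1]
      exact Finset.sum_congr rfl fun i _ => mul_comm _ _
    set k : ℤ := ⌊coordsOf B z m⌋ with hk
    have hzQ : (∑ i ∈ Q, z i) = ((ε * k : ℤ) : ℝ) := by
      rw [hQ1 z, ← hdotz, hkz]
      push_cast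
      ring
    have hQP : Q = P ∧ ε * k = l := by
      by_contra hcon
      exact hother Q (ε * k) ⟨hQne, hQl⟩ hcon ⟨hzsum, hzQ⟩
    obtain ⟨hQP', hkl⟩ := hQP
    rw [splits_iff_unique_cross hB]
    have hsum_eq : ∀ j, (∑ i ∈ P, B j i) = (ε:ℝ) * (if j = m then 1 else 0) := by
      intro j
      rw [← hQP', hQ1 (B j), weight_dot hB ℓ m j]
    refine ⟨m, ?_, ?_⟩
    · show (∑ i ∈ P, B m i) ≠ 0
      rw [hsum_eq m, if_pos rfl, mul_one]
      rcases hε with h | h <;> rw [h] <;> norm_num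
    · intro j hj
      have hj' : (∑ i ∈ P, B j i) ≠ 0 := hj
      by_contra hjm
      rw [hsum_eq j, if_neg hjm, mul_zero] at hj'
      exact hj' rfl
  · intro hsplit
    rw [splits_iff_unique_cross hB] at hsplit
    obtain ⟨m, hm, huniq⟩ := hsplit
    obtain ⟨z, hzsum, hzP, hzQ⟩ := exists_generic hr P hP.1 hP.2 l
    refine ⟨z, ⟨hzsum, hzP⟩, ?_, ?_⟩
    · intro Q l' hQnt hne hmem
      by_cases hQP : Q = P
      · subst hQP
        apply hne
        refine ⟨rfl, ?_⟩
        have h2 : ((l':ℤ):ℝ) = ((l:ℤ):ℝ) := by rw [← hmem.2, hzP]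
        exact_mod_cast h2
      · exact hzQ Q hQnt.1 hQnt.2 hQP l' hmem.2
    · obtain ⟨i, j, hij, hBm⟩ := hB.1 m
      have hsval : (∑ t ∈ P, B m t) = 1 ∨ (∑ t ∈ P, B m t) = -1 := by
        rw [hBm, sumP_stdRoot]
        rw [hBm, sumP_stdRoot] at hm
        by_cases h1 : i ∈ P <;> by_cases h2 : j ∈ P
        · exfalso; rw [if_pos h1, if_pos h2] at hm; exact hm (by ring)
        · left; rw [if_pos h1, if_neg h2]; ring
        · right; rw [if_neg h1, if_pos h2]; ring
        · exfalso; rw [if_neg h1, if_neg h2] at hm; exact hm (by ring)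
      have hl : (l:ℝ) = coordsOf B z m * (∑ t ∈ P, B m t) := by
        rw [← hzP, sumP_coords hB hzsum P]
        refine Finset.sum_eq_single m (fun j' _ hj' => ?_)
          (fun hmem => absurd (Finset.mem_univ m) hmem)
        have hz0 : (∑ t ∈ P, B j' t) = 0 := by
          by_contra hcon
          exact hj' (huniq j' hcon)
        rw [hz0, mul_zero]
      rcases hsval with h | h
      · apply discont_of_int_coord hB hzsum (k := l)
        rw [h, mul_one] at hl
        exact hl.symm
      · apply discont_of_int_coord hB hzsum (k := -l)
        rw [h] at hl
        push_cast
        linarith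


end Verlinde
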